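/- arXiv:1702.07064 — 7 statements merged into one kernel-verified Lean document; each statement's English description precedes it below -/
import Mathlib

section
/- Let U ⊆ ℝ^m be a convex set and let A be an n×n real matrix and B an n×m real matrix. Let I be a finite nonempty index set, z : I → ℝ^n stored states and v : I → ℝ^m stored inputs with v i ∈ U for every i, such that for every i ∈ I there exists j ∈ I with z j = A (z i) + B (v i). Then the convex safe set CS = convexHull ℝ {z i : i ∈ I} is control invariant: for every x ∈ CS there exists u ∈ U such that A x + B u ∈ CS. -/
/-- The convex safe set `CS = convexHull ℝ {z i : i ∈ I}` built from stored
states with stored successors is control invariant for `x⁺ = A x + B u`. -/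
theorem convex_safe_set_control_invariant
    {n m : ℕ} {ι : Type*} [Fintype ι] [Nonempty ι]
    (A : Matrix (Fin n) (Fin n) ℝ) (B : Matrix (Fin n) (Fin m) ℝ)
    (U : Set (Fin m → ℝ)) (hU : Convex ℝ U)
    (z : ι → Fin n → ℝ) (v : ι → Fin m → ℝ)
    (hv : ∀ i, v i ∈ U)
    (hsucc : ∀ i, ∃ j, z j = A.mulVec (z i) + B.mulVec (v i)) :
    ∀ x ∈ convexHull ℝ (Set.range z),
      ∃ u ∈ U, A.mulVec x + B.mulVec u ∈ convexHull ℝ (Set.range z) := by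
  intro x hx
  rw [mem_convexHull_iff_exists_fintype] at hx
  obtain ⟨κ, _, w, y, hw₀, hw₁, hy, hxeq⟩ := hx
  choose ind hind using fun k => Set.mem_range.mp (hy k)
  refine ⟨∑ k, w k • v (ind k), ?_, ?_⟩
  · exact hU.sum_mem (fun k _ => hw₀ k) hw₁ (fun k _ => hv (ind k))
  · choose j hj using fun k => hsucc (ind k)
    have key : A.mulVec x + B.mulVec (∑ k, w k • v (ind k)) = ∑ k, w k • z (j k) := by
      subst hxeq
      simp only [hj, hind]
      rw [← A.mulVecLin_apply, ← B.mulVecLin_apply, map_sum, map_sum]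
      rw [← Finset.sum_add_distrib]
      congr 1; ext k
      simp [Matrix.mulVecLin_apply, Matrix.mulVec_smul, smul_add, mul_add]
    rw [key]
    exact mem_convexHull_of_exists_fintype w (fun k => z (j k)) hw₀ hw₁
      (fun k => Set.mem_range_self _) rfl
end

section
/- Let A be an n×n real matrix, B an n×m real matrix, U ⊆ ℝ^m convex, and h : ℝ^n × ℝ^m → ℝ jointly convex. Let I be a finite nonempty index set with stored states z : I → ℝ^n, stored inputs v : I → ℝ^m with v i ∈ U, a successor map σ : I → I with z (σ i) = A (z i) + B (v i) for all i, and stored costs c : I → ℝ satisfying c i = h(z i, v i) + c (σ i) for all i. Let p be the barycentric cost function built from z and c, and CS = convexHull ℝ {z i : i ∈ I}. Then for every x ∈ CS there exists u ∈ U such that A x + B u ∈ CS and p(A x + B u) ≤ p(x) − h(x, u). -/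
/-- The barycentric cost function built from stored points `z` and stored costs `c`:
`p(x) = sInf { ∑ i, λ i * c i : λ ≥ 0, ∑ λ = 1, ∑ λ • z = x }`. -/
noncomputable def barycentric {n : ℕ} {ι : Type*} [Fintype ι]
    (z : ι → Fin n → ℝ) (c : ι → ℝ) (x : Fin n → ℝ) : ℝ :=
  sInf {s : ℝ | ∃ lam : ι → ℝ, (∀ i, 0 ≤ lam i) ∧ (∑ i, lam i) = 1 ∧
    (∑ i, lam i • z i) = x ∧ s = ∑ i, lam i * c i}

lemma barycentric_set_compact {n : ℕ} {ι : Type*} [Fintype ι]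
    (z : ι → Fin n → ℝ) (c : ι → ℝ) (x : Fin n → ℝ) :
    IsCompact {s : ℝ | ∃ lam : ι → ℝ, (∀ i, 0 ≤ lam i) ∧ (∑ i, lam i) = 1 ∧
      (∑ i, lam i • z i) = x ∧ s = ∑ i, lam i * c i} := by
  classical
  set K : Set (ι → ℝ) :=
    {lam | (∀ i, 0 ≤ lam i) ∧ (∑ i, lam i) = 1 ∧ (∑ i, lam i • z i) = x} with hK
  have hKc : IsCompact K := by
    have hsub : K ⊆ Set.Icc 0 1 := by
      rintro lam ⟨h0, h1, -⟩
      refine ⟨fun i => h0 i, fun i => ?_⟩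
      calc lam i ≤ ∑ j, lam j :=
            Finset.single_le_sum (fun j _ => h0 j) (Finset.mem_univ i)
        _ = 1 := h1
    have hcl : IsClosed K := by
      have c1 : IsClosed {lam : ι → ℝ | ∀ i, 0 ≤ lam i} := by
        have : {lam : ι → ℝ | ∀ i, 0 ≤ lam i} = ⋂ i, {lam : ι → ℝ | 0 ≤ lam i} := by
          ext; simp
        rw [this]
        exact isClosed_iInter fun i => isClosed_Ici.preimage (continuous_apply i)
      have c2 : IsClosed {lam : ι → ℝ | (∑ i, lam i) = 1} :=
        isClosed_eq (continuous_finset_sum _ fun i _ => continuous_apply i) continuous_const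
      have c3 : IsClosed {lam : ι → ℝ | (∑ i, lam i • z i) = x} :=
        isClosed_eq (continuous_finset_sum _ fun i _ =>
          (continuous_apply i).smul continuous_const) continuous_const
      have : K = {lam : ι → ℝ | ∀ i, 0 ≤ lam i} ∩
          ({lam : ι → ℝ | (∑ i, lam i) = 1} ∩ {lam : ι → ℝ | (∑ i, lam i • z i) = x}) := by
        ext lam; simp [hK, Set.mem_inter_iff, and_assoc]
      rw [this]
      exact c1.inter (c2.inter c3)
    exact isCompact_Icc.of_isClosed_subset hcl hsub
  have hS : {s : ℝ | ∃ lam : ι → ℝ, (∀ i, 0 ≤ lam i) ∧ (∑ i, lam i) = 1 ∧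
      (∑ i, lam i • z i) = x ∧ s = ∑ i, lam i * c i} =
      (fun lam : ι → ℝ => ∑ i, lam i * c i) '' K := by
    ext s; constructor
    · rintro ⟨lam, h0, h1, h2, rfl⟩; exact ⟨lam, ⟨h0, h1, h2⟩, rfl⟩
    · rintro ⟨lam, ⟨h0, h1, h2⟩, rfl⟩; exact ⟨lam, h0, h1, h2, rfl⟩
  rw [hS]
  exact hKc.image (continuous_finset_sum _ fun i _ => (continuous_apply i).mul continuous_const)

lemma barycentric_le {n : ℕ} {ι : Type*} [Fintype ι]
    (z : ι → Fin n → ℝ) (c : ι → ℝ) (x : Fin n → ℝ) (lam : ι → ℝ)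
    (h0 : ∀ i, 0 ≤ lam i) (h1 : (∑ i, lam i) = 1) (h2 : (∑ i, lam i • z i) = x) :
    barycentric z c x ≤ ∑ i, lam i * c i :=
  csInf_le (barycentric_set_compact z c x).bddBelow ⟨lam, h0, h1, h2, rfl⟩

lemma barycentric_attained {n : ℕ} {ι : Type*} [Fintype ι]
    (z : ι → Fin n → ℝ) (c : ι → ℝ) (x : Fin n → ℝ)
    (hx : ∃ lam : ι → ℝ, (∀ i, 0 ≤ lam i) ∧ (∑ i, lam i) = 1 ∧ (∑ i, lam i • z i) = x) :
    ∃ lam : ι → ℝ, (∀ i, 0 ≤ lam i) ∧ (∑ i, lam i) = 1 ∧ (∑ i, lam i • z i) = x ∧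
      barycentric z c x = ∑ i, lam i * c i := by
  obtain ⟨lam0, h0, h1, h2⟩ := hx
  have hne : {s : ℝ | ∃ lam : ι → ℝ, (∀ i, 0 ≤ lam i) ∧ (∑ i, lam i) = 1 ∧
      (∑ i, lam i • z i) = x ∧ s = ∑ i, lam i * c i}.Nonempty :=
    ⟨_, lam0, h0, h1, h2, rfl⟩
  have := (barycentric_set_compact z c x).sInf_mem hne
  obtain ⟨lam, ha, hb, hcc, hd⟩ := this
  exact ⟨lam, ha, hb, hcc, hd⟩

lemma exists_lam_of_mem_convexHull_range {n : ℕ} {ι : Type*} [Fintype ι]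
    (z : ι → Fin n → ℝ) (x : Fin n → ℝ) (hx : x ∈ convexHull ℝ (Set.range z)) :
    ∃ lam : ι → ℝ, (∀ i, 0 ≤ lam i) ∧ (∑ i, lam i) = 1 ∧ (∑ i, lam i • z i) = x := by
  classical
  rw [convexHull_range_eq_exists_affineCombination] at hx
  obtain ⟨s, w, hw0, hw1, hwx⟩ := hx
  refine ⟨fun i => if i ∈ s then w i else 0, ?_, ?_, ?_⟩
  · intro i; dsimp only; split_ifs with hi
    · exact hw0 i hi
    · exact le_refl 0
  · rw [Finset.sum_ite_mem, Finset.univ_inter]; exact hw1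
  · have : (∑ i, (if i ∈ s then w i else 0) • z i) = ∑ i ∈ s, w i • z i := by
      simp only [ite_smul, zero_smul, Finset.sum_ite_mem, Finset.univ_inter]
    rw [this, ← s.affineCombination_eq_linear_combination z w hw1, hwx]

/-- On the convex safe set, there is an admissible input keeping the state
in the convex safe set and decreasing the barycentric cost by at least the stage cost. -/
theorem barycentric_decrease_on_convex_safe_set
    {n m : ℕ} {ι : Type*} [Fintype ι] [Nonempty ι]
    (A : Matrix (Fin n) (Fin n) ℝ) (B : Matrix (Fin n) (Fin m) ℝ)
    (U : Set (Fin m → ℝ)) (hU : Convex ℝ U)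
    (h : (Fin n → ℝ) → (Fin m → ℝ) → ℝ)
    (hconv : ConvexOn ℝ Set.univ (fun q : (Fin n → ℝ) × (Fin m → ℝ) => h q.1 q.2))
    (z : ι → Fin n → ℝ) (v : ι → Fin m → ℝ) (hv : ∀ i, v i ∈ U)
    (σ : ι → ι) (hσ : ∀ i, z (σ i) = A.mulVec (z i) + B.mulVec (v i))
    (c : ι → ℝ) (hc : ∀ i, c i = h (z i) (v i) + c (σ i)) :
    ∀ x ∈ convexHull ℝ (Set.range z),
      ∃ u ∈ U, A.mulVec x + B.mulVec u ∈ convexHull ℝ (Set.range z) ∧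
        barycentric z c (A.mulVec x + B.mulVec u) ≤ barycentric z c x - h x u := by
  classical
  intro x hx
  obtain ⟨lam, h0, h1, h2, hp⟩ :=
    barycentric_attained z c x (exists_lam_of_mem_convexHull_range z x hx)
  set u : Fin m → ℝ := ∑ i, lam i • v i with hu
  have huU : u ∈ U :=
    hU.sum_mem (fun i _ => h0 i) h1 (fun i _ => hv i)
  have hlin : ∀ (k l : ℕ) (M : Matrix (Fin k) (Fin l) ℝ) (w : ι → Fin l → ℝ),
      M.mulVec (∑ i, lam i • w i) = ∑ i, lam i • M.mulVec (w i) := by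
    intro k l M w
    rw [← Matrix.mulVecLin_apply, map_sum]
    simp [Matrix.mulVecLin_apply]
  have hy : A.mulVec x + B.mulVec u = ∑ i, lam i • z (σ i) := by
    rw [← h2, hu, hlin, hlin, ← Finset.sum_add_distrib]
    refine Finset.sum_congr rfl fun i _ => ?_
    rw [hσ i, smul_add]
  refine ⟨u, huU, ?_, ?_⟩
  · rw [hy]
    exact (convex_convexHull ℝ _).sum_mem (fun i _ => h0 i) h1
      (fun i _ => subset_convexHull ℝ _ ⟨σ i, rfl⟩)
  · -- weights on successors
    set mu : ι → ℝ := fun j => ∑ i ∈ Finset.univ.filter (fun i => σ i = j), lam i with hmu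
    have hmu0 : ∀ j, 0 ≤ mu j := fun j => Finset.sum_nonneg fun i _ => h0 i
    have hmu1 : (∑ j, mu j) = 1 := by
      rw [hmu]; rw [Finset.sum_fiberwise Finset.univ σ lam]; exact h1
    have hmu2 : (∑ j, mu j • z j) = A.mulVec x + B.mulVec u := by
      rw [hy, hmu]
      rw [← Finset.sum_fiberwise Finset.univ σ (fun i => lam i • z (σ i))]
      refine Finset.sum_congr rfl fun j _ => ?_
      rw [Finset.sum_smul]
      refine Finset.sum_congr rfl fun i hi => ?_
      rw [(Finset.mem_filter.mp hi).2]
    have hmuc : (∑ j, mu j * c j) = ∑ i, lam i * c (σ i) := by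
      rw [hmu, ← Finset.sum_fiberwise Finset.univ σ (fun i => lam i * c (σ i))]
      refine Finset.sum_congr rfl fun j _ => ?_
      rw [Finset.sum_mul]
      refine Finset.sum_congr rfl fun i hi => ?_
      rw [(Finset.mem_filter.mp hi).2]
    have hble : barycentric z c (A.mulVec x + B.mulVec u) ≤ ∑ j, mu j * c j :=
      barycentric_le z c _ mu hmu0 hmu1 hmu2
    -- Jensen
    have hjen : h x u ≤ ∑ i, lam i * h (z i) (v i) := by
      have hmap := hconv.map_sum_le (t := Finset.univ) (w := lam)
        (p := fun i => ((z i, v i) : (Fin n → ℝ) × (Fin m → ℝ)))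
        (fun i _ => h0 i) h1 (fun i _ => Set.mem_univ _)
      have hsum : (∑ i, lam i • ((z i, v i) : (Fin n → ℝ) × (Fin m → ℝ))) = (x, u) := by
        rw [Prod.ext_iff]
        constructor
        · rw [Prod.fst_sum]; simpa using h2
        · rw [Prod.snd_sum]; simp [hu]
      rw [hsum] at hmap
      simpa [smul_eq_mul] using hmap
    calc barycentric z c (A.mulVec x + B.mulVec u) ≤ ∑ j, mu j * c j := hble
      _ = ∑ i, lam i * c (σ i) := hmuc
      _ = ∑ i, lam i * (c i - h (z i) (v i)) := by
          refine Finset.sum_congr rfl fun i _ => ?_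
          rw [hc i]; ring
      _ = (∑ i, lam i * c i) - ∑ i, lam i * h (z i) (v i) := by
          rw [← Finset.sum_sub_distrib]
          exact Finset.sum_congr rfl fun i _ => by ring
      _ ≤ (∑ i, lam i * c i) - h x u := by linarith
      _ = barycentric z c x - h x u := by rw [hp]
end

section
/- Let A be an n×n real matrix, B an n×m real matrix, X ⊆ ℝ^n and U ⊆ ℝ^m convex sets. Let I be a finite nonempty index set with stored states z : I → ℝ^n satisfying z i ∈ X and stored inputs v : I → ℝ^m with v i ∈ U, such that for every i ∈ I there exists j ∈ I with z j = A (z i) + B (v i), and let CS = convexHull ℝ {z i : i ∈ I}. Fix a horizon N ≥ 1. If the inputs u_0, …, u_{N−1} ∈ U together with the states x_0 = x, x_{k+1} = A x_k + B u_k are feasible for initial state x (i.e., x_k ∈ X for k = 0, …, N−1 and x_N ∈ CS), then the LMPC problem is also feasible for the successor state x_1 = A x + B u_0: there exist inputs u'_0, …, u'_{N−1} ∈ U whose generated states x'_0 = x_1, x'_{k+1} = A x'_k + B u'_k satisfy x'_k ∈ X for k = 0, …, N−1 and x'_N ∈ CS. -/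
/-- Feasibility of the LMPC finite-time optimal control problem with horizon `N` at
initial state `x`: the inputs `u 0, …, u (N-1)` and the states `xs 0 = x`,
`xs (k+1) = A (xs k) + B (u k)` satisfy the state, input and terminal constraints. -/
def Feasible {n m : ℕ} (A : Matrix (Fin n) (Fin n) ℝ) (B : Matrix (Fin n) (Fin m) ℝ)
    (X : Set (Fin n → ℝ)) (U : Set (Fin m → ℝ)) (CS : Set (Fin n → ℝ)) (N : ℕ)
    (x : Fin n → ℝ) (u : ℕ → Fin m → ℝ) (xs : ℕ → Fin n → ℝ) : Prop :=
  xs 0 = x ∧ (∀ k < N, xs (k + 1) = A.mulVec (xs k) + B.mulVec (u k)) ∧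
    (∀ k < N, xs k ∈ X) ∧ (∀ k < N, u k ∈ U) ∧ xs N ∈ CS

/-- Recursive feasibility of the LMPC: if the problem is feasible at `x`
with first input `u 0`, then it is feasible at the successor state `A x + B (u 0)`. -/
theorem lmpc_recursive_feasibility
    {n m : ℕ} {ι : Type*} [Fintype ι] [Nonempty ι]
    (A : Matrix (Fin n) (Fin n) ℝ) (B : Matrix (Fin n) (Fin m) ℝ)
    (X : Set (Fin n → ℝ)) (hX : Convex ℝ X)
    (U : Set (Fin m → ℝ)) (hU : Convex ℝ U)
    (z : ι → Fin n → ℝ) (hz : ∀ i, z i ∈ X)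
    (v : ι → Fin m → ℝ) (hv : ∀ i, v i ∈ U)
    (hsucc : ∀ i, ∃ j, z j = A.mulVec (z i) + B.mulVec (v i))
    (N : ℕ) (hN : 1 ≤ N)
    (x : Fin n → ℝ) (u : ℕ → Fin m → ℝ) (xs : ℕ → Fin n → ℝ)
    (hfeas : Feasible A B X U (convexHull ℝ (Set.range z)) N x u xs) :
    ∃ u' xs', Feasible A B X U (convexHull ℝ (Set.range z)) N
      (A.mulVec x + B.mulVec (u 0)) u' xs' := by
  obtain ⟨hx0, hdyn, hstate, hinput, hterm⟩ := hfeas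
  rw [convexHull_range_eq_exists_affineCombination] at hterm
  obtain ⟨s, w, hw0, hw1, hcomb⟩ := hterm
  rw [Finset.affineCombination_eq_linear_combination s z w hw1] at hcomb
  choose σ hσ using hsucc
  have hCSX : convexHull ℝ (Set.range z) ⊆ X :=
    convexHull_min (Set.range_subset_iff.2 hz) hX
  have hsum : ∀ {p : ℕ} (M : Matrix (Fin n) (Fin p) ℝ) (f : ι → Fin p → ℝ),
      M.mulVec (∑ i ∈ s, w i • f i) = ∑ i ∈ s, w i • M.mulVec (f i) := by
    intro p M f
    rw [← Matrix.mulVecLin_apply, map_sum]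
    simp [Matrix.mulVecLin_apply]
  refine ⟨fun k => if k + 1 < N then u (k + 1) else ∑ i ∈ s, w i • v i,
    fun k => if k < N then xs (k + 1) else ∑ i ∈ s, w i • z (σ i), ?_, ?_, ?_, ?_, ?_⟩
  · simp only [hN, Nat.lt_of_lt_of_le Nat.zero_lt_one hN, if_pos]
    rw [hdyn 0 (by omega), hx0]
  · intro k hk
    by_cases h : k + 1 < N
    · simp only [if_pos h, if_pos hk]
      exact hdyn (k + 1) h
    · have hkN : k + 1 = N := by omega
      rw [hkN]
      simp only [if_neg (lt_irrefl N), if_pos hk, hkN, ← hcomb]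
      rw [hsum, hsum, ← Finset.sum_add_distrib]
      refine Finset.sum_congr rfl fun i _ => ?_
      rw [← smul_add, hσ i]
  · intro k hk
    simp only [if_pos hk]
    by_cases h : k + 1 < N
    · exact hstate (k + 1) h
    · have hkN : k + 1 = N := by omega
      rw [hkN]
      exact hCSX (hcomb ▸ (convex_convexHull ℝ _).sum_mem hw0 hw1
        fun i _ => subset_convexHull ℝ _ ⟨i, rfl⟩)
  · intro k hk
    by_cases h : k + 1 < N
    · simp only [if_pos h]; exact hinput (k + 1) h
    · simp only [if_neg h]
      exact hU.sum_mem hw0 hw1 fun i _ => hv i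
  · simp only [lt_irrefl, if_neg (lt_irrefl N)]
    exact (convex_convexHull ℝ _).sum_mem hw0 hw1
      fun i _ => subset_convexHull ℝ _ (Set.mem_range_self (σ i))
end

section
/- Let A be an n×n real matrix, B an n×m real matrix, X ⊆ ℝ^n and U ⊆ ℝ^m sets, h : ℝ^n × ℝ^m → ℝ nonnegative, and let N ≥ 1. Let I be a finite nonempty index set with stored states z : I → ℝ^n and stored costs c : I → ℝ with c i ≥ 0, let p be the barycentric cost function built from z and c, CS = convexHull ℝ {z i : i ∈ I}, and Q the LMPC value function. Suppose (x_t)_{t=0}^{T} and (u_t)_{t=0}^{T−1} with T ≥ N satisfy x_{t+1} = A x_t + B u_t, x_t ∈ X, u_t ∈ U, and suppose that for every t ≤ T there exists i_t ∈ I with z i_t = x_t and c i_t = ∑_{l=t}^{T−1} h(x_l, u_l). Then Q(x_0) ≤ ∑_{t=0}^{T−1} h(x_t, u_t), i.e., the LMPC value at the initial state is bounded above by the realized cost of the stored trajectory. -/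
/-- The LMPC value function `Q` with horizon `N`, stage cost `h`, terminal set `CS`
and terminal cost `p`. -/
noncomputable def lmpcValue {n m : ℕ} (A : Matrix (Fin n) (Fin n) ℝ)
    (B : Matrix (Fin n) (Fin m) ℝ) (X : Set (Fin n → ℝ)) (U : Set (Fin m → ℝ))
    (CS : Set (Fin n → ℝ)) (N : ℕ) (h : (Fin n → ℝ) → (Fin m → ℝ) → ℝ)
    (p : (Fin n → ℝ) → ℝ) (x : Fin n → ℝ) : ℝ :=
  sInf {s : ℝ | ∃ u xs, Feasible A B X U CS N x u xs ∧
    s = (∑ k ∈ Finset.range N, h (xs k) (u k)) + p (xs N)}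

/-- The LMPC value at the initial state of a stored trajectory is bounded
above by the realized cost of that stored trajectory. -/
theorem lmpc_value_le_stored_cost
    {n m : ℕ} {ι : Type*} [Fintype ι] [Nonempty ι]
    (A : Matrix (Fin n) (Fin n) ℝ) (B : Matrix (Fin n) (Fin m) ℝ)
    (X : Set (Fin n → ℝ)) (U : Set (Fin m → ℝ))
    (h : (Fin n → ℝ) → (Fin m → ℝ) → ℝ) (hpos : ∀ x u, 0 ≤ h x u)
    (N : ℕ) (hN : 1 ≤ N)
    (z : ι → Fin n → ℝ) (c : ι → ℝ) (hcpos : ∀ i, 0 ≤ c i)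
    (T : ℕ) (hT : N ≤ T)
    (x : ℕ → Fin n → ℝ) (u : ℕ → Fin m → ℝ)
    (hdyn : ∀ t < T, x (t + 1) = A.mulVec (x t) + B.mulVec (u t))
    (hxX : ∀ t ≤ T, x t ∈ X) (huU : ∀ t < T, u t ∈ U)
    (hstored : ∀ t ≤ T, ∃ i : ι, z i = x t ∧
      c i = ∑ l ∈ Finset.Ico t T, h (x l) (u l)) :
    lmpcValue A B X U (convexHull ℝ (Set.range z)) N h (barycentric z c) (x 0) ≤
      ∑ t ∈ Finset.range T, h (x t) (u t) := by
  classical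
  -- nonnegativity of barycentric cost
  have hp_nonneg : ∀ y, 0 ≤ barycentric z c y := by
    intro y
    apply Real.sInf_nonneg
    rintro s ⟨lam, hlam, -, -, rfl⟩
    exact Finset.sum_nonneg fun i _ => mul_nonneg (hlam i) (hcpos i)
  obtain ⟨iN, hziN, hciN⟩ := hstored N hT
  -- barycentric z c (x N) ≤ c iN
  have hbdd : BddBelow {s : ℝ | ∃ lam : ι → ℝ, (∀ i, 0 ≤ lam i) ∧ (∑ i, lam i) = 1 ∧
      (∑ i, lam i • z i) = x N ∧ s = ∑ i, lam i * c i} := by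
    refine ⟨0, ?_⟩
    rintro s ⟨lam, hlam, -, -, rfl⟩
    exact Finset.sum_nonneg fun i _ => mul_nonneg (hlam i) (hcpos i)
  have hpN : barycentric z c (x N) ≤ c iN := by
    apply csInf_le hbdd
    refine ⟨fun j => if j = iN then 1 else 0, ?_, ?_, ?_, ?_⟩
    · intro i; dsimp only; split <;> norm_num
    · simp
    · rw [← hziN]
      rw [Finset.sum_eq_single iN]
      · simp
      · intro b _ hb; simp [hb]
      · intro hb; simp at hb
    · rw [Finset.sum_eq_single iN]
      · simp
      · intro b _ hb; simp [hb]
      · intro hb; simp at hb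
  -- Q(x 0) ≤ ∑_{k<N} h + p (x N)
  have hQ : lmpcValue A B X U (convexHull ℝ (Set.range z)) N h (barycentric z c) (x 0) ≤
      (∑ k ∈ Finset.range N, h (x k) (u k)) + barycentric z c (x N) := by
    apply csInf_le
    · refine ⟨0, ?_⟩
      rintro s ⟨u', xs', -, rfl⟩
      have := hp_nonneg (xs' N)
      have : 0 ≤ ∑ k ∈ Finset.range N, h (xs' k) (u' k) :=
        Finset.sum_nonneg fun k _ => hpos _ _
      positivity
    · refine ⟨u, x, ⟨rfl, ?_, ?_, ?_, ?_⟩, rfl⟩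
      · intro k hk; exact hdyn k (lt_of_lt_of_le hk hT)
      · intro k hk; exact hxX k (le_of_lt (lt_of_lt_of_le hk hT))
      · intro k hk; exact huU k (lt_of_lt_of_le hk hT)
      · rw [← hziN]
        exact subset_convexHull ℝ _ ⟨iN, rfl⟩
  have hsum : (∑ k ∈ Finset.range N, h (x k) (u k)) + c iN =
      ∑ t ∈ Finset.range T, h (x t) (u t) := by
    rw [hciN, Finset.range_eq_Ico, Finset.range_eq_Ico]
    exact Finset.sum_Ico_consecutive (fun l => h (x l) (u l)) (Nat.zero_le N) hT
  calc lmpcValue A B X U (convexHull ℝ (Set.range z)) N h (barycentric z c) (x 0)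
      ≤ (∑ k ∈ Finset.range N, h (x k) (u k)) + barycentric z c (x N) := hQ
    _ ≤ (∑ k ∈ Finset.range N, h (x k) (u k)) + c iN := by linarith
    _ = ∑ t ∈ Finset.range T, h (x t) (u t) := hsum
end

section
/- Theorem 2 (non-increasing iteration cost). Let A be an n×n real matrix, B an n×m real matrix, X ⊆ ℝ^n and U ⊆ ℝ^m convex sets, and h : ℝ^n × ℝ^m → ℝ jointly convex and nonnegative. Let I be a finite nonempty index set with stored states z : I → ℝ^n satisfying z i ∈ X, stored inputs v : I → ℝ^m with v i ∈ U, a successor map σ : I → I with z (σ i) = A (z i) + B (v i), and stored costs c : I → ℝ with c i ≥ 0 and c i = h(z i, v i) + c (σ i) for all i; let p be the barycentric cost function from z and c, CS = convexHull ℝ {z i : i ∈ I}, and Q the LMPC value function with horizon N ≥ 1. Suppose the previous iteration trajectory (x^{prev}_t)_{t=0}^{T}, (u^{prev}_t)_{t=0}^{T−1} with T ≥ N satisfies the dynamics and constraints and is stored: for every t ≤ T there is i_t ∈ I with z i_t = x^{prev}_t and c i_t = ∑_{l=t}^{T−1} h(x^{prev}_l, u^{prev}_l). Suppose the closed-loop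 sequences (x_t)_{t∈ℕ}, (u_t)_{t∈ℕ} satisfy x_0 = x^{prev}_0 and, for every t, there is a feasible solution for initial state x_t attaining Q(x_t) whose first input is u_t and x_{t+1} = A x_t + B u_t. Then the new iteration cost does not exceed the previous one: t ↦ h(x_t, u_t) is summable and ∑'_{t∈ℕ} h(x_t, u_t) ≤ ∑_{t=0}^{T−1} h(x^{prev}_t, u^{prev}_t). -/
section Aux

variable {n m : ℕ} {ι : Type*} [Fintype ι]

lemma aux_mulVec_sum_smul {n' m' : ℕ} (M : Matrix (Fin n') (Fin m') ℝ) (lam : ι → ℝ)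
    (w : ι → Fin m' → ℝ) :
    M.mulVec (∑ i, lam i • w i) = ∑ i, lam i • M.mulVec (w i) := by
  simp only [← Matrix.mulVecLin_apply, map_sum, map_smul]

lemma aux_barycentric_nonneg (z : ι → Fin n → ℝ) (c : ι → ℝ) (hc : ∀ i, 0 ≤ c i)
    (x : Fin n → ℝ) : 0 ≤ barycentric z c x := by
  apply Real.sInf_nonneg
  rintro s ⟨lam, h0, h1, h2, rfl⟩
  exact Finset.sum_nonneg fun i _ => mul_nonneg (h0 i) (hc i)

lemma aux_barycentric_le (z : ι → Fin n → ℝ) (c : ι → ℝ) (hc : ∀ i, 0 ≤ c i)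
    (lam : ι → ℝ) (h0 : ∀ i, 0 ≤ lam i) (h1 : (∑ i, lam i) = 1) :
    barycentric z c (∑ i, lam i • z i) ≤ ∑ i, lam i * c i := by
  apply csInf_le
  · refine ⟨0, ?_⟩
    rintro s ⟨lam', h0', h1', h2', rfl⟩
    exact Finset.sum_nonneg fun i _ => mul_nonneg (h0' i) (hc i)
  · exact ⟨lam, h0, h1, rfl, rfl⟩

lemma aux_barycentric_comp (z : ι → Fin n → ℝ) (c : ι → ℝ) (hc : ∀ i, 0 ≤ c i)
    (σ : ι → ι) (lam : ι → ℝ) (h0 : ∀ i, 0 ≤ lam i) (h1 : (∑ i, lam i) = 1) :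
    barycentric z c (∑ i, lam i • z (σ i)) ≤ ∑ i, lam i * c (σ i) := by
  classical
  set lam' : ι → ℝ := fun j => ∑ i ∈ Finset.univ.filter (fun i => σ i = j), lam i with hlam'
  have h0' : ∀ j, 0 ≤ lam' j := fun j => Finset.sum_nonneg fun i _ => h0 i
  have h1' : (∑ j, lam' j) = 1 := by
    rw [hlam', Finset.sum_fiberwise Finset.univ σ lam]; exact h1
  have hz' : (∑ j, lam' j • z j) = ∑ i, lam i • z (σ i) := by
    rw [← Finset.sum_fiberwise Finset.univ σ (fun i => lam i • z (σ i))]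
    refine Finset.sum_congr rfl fun j _ => ?_
    rw [hlam', Finset.sum_smul]
    refine Finset.sum_congr rfl fun i hi => ?_
    rw [(Finset.mem_filter.mp hi).2]
  have hc' : (∑ j, lam' j * c j) = ∑ i, lam i * c (σ i) := by
    rw [← Finset.sum_fiberwise Finset.univ σ (fun i => lam i * c (σ i))]
    refine Finset.sum_congr rfl fun j _ => ?_
    rw [hlam', Finset.sum_mul]
    refine Finset.sum_congr rfl fun i hi => ?_
    rw [(Finset.mem_filter.mp hi).2]
  rw [← hz', ← hc']
  exact aux_barycentric_le z c hc lam' h0' h1'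

lemma aux_exists_lam_of_mem_convexHull (z : ι → Fin n → ℝ) {y : Fin n → ℝ}
    (hy : y ∈ convexHull ℝ (Set.range z)) :
    ∃ lam : ι → ℝ, (∀ i, 0 ≤ lam i) ∧ (∑ i, lam i) = 1 ∧ (∑ i, lam i • z i) = y := by
  classical
  rw [convexHull_range_eq_exists_affineCombination] at hy
  obtain ⟨s, w, h0, h1, hx⟩ := hy
  refine ⟨fun i => if i ∈ s then w i else 0, fun i => ?_, ?_, ?_⟩
  · dsimp only
    split_ifs with hi
    · exact h0 i hi
    · exact le_refl 0
  · dsimp only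
    rw [Finset.sum_ite_mem, Finset.univ_inter]; exact h1
  · dsimp only
    rw [Finset.affineCombination_eq_linear_combination s z w h1] at hx
    calc (∑ i, (if i ∈ s then w i else 0) • z i)
        = ∑ i, (if i ∈ s then w i • z i else 0) := by
          refine Finset.sum_congr rfl fun i _ => ?_
          split_ifs <;> simp
      _ = ∑ i ∈ Finset.univ ∩ s, w i • z i := Finset.sum_ite_mem _ _ _
      _ = y := by rw [Finset.univ_inter]; exact hx

lemma aux_lmpcValue_nonneg (A : Matrix (Fin n) (Fin n) ℝ) (B : Matrix (Fin n) (Fin m) ℝ)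
    (X : Set (Fin n → ℝ)) (U : Set (Fin m → ℝ)) (CS : Set (Fin n → ℝ)) (N : ℕ)
    (h : (Fin n → ℝ) → (Fin m → ℝ) → ℝ) (p : (Fin n → ℝ) → ℝ)
    (hpos : ∀ x u, 0 ≤ h x u) (hppos : ∀ y, 0 ≤ p y) (x : Fin n → ℝ) :
    0 ≤ lmpcValue A B X U CS N h p x := by
  apply Real.sInf_nonneg
  rintro s ⟨u', xs', _, rfl⟩
  exact add_nonneg (Finset.sum_nonneg fun _ _ => hpos _ _) (hppos _)

lemma aux_lmpcValue_le (A : Matrix (Fin n) (Fin n) ℝ) (B : Matrix (Fin n) (Fin m) ℝ)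
    (X : Set (Fin n → ℝ)) (U : Set (Fin m → ℝ)) (CS : Set (Fin n → ℝ)) (N : ℕ)
    (h : (Fin n → ℝ) → (Fin m → ℝ) → ℝ) (p : (Fin n → ℝ) → ℝ)
    (hpos : ∀ x u, 0 ≤ h x u) (hppos : ∀ y, 0 ≤ p y) (x : Fin n → ℝ)
    (us : ℕ → Fin m → ℝ) (xs : ℕ → Fin n → ℝ) (hf : Feasible A B X U CS N x us xs) :
    lmpcValue A B X U CS N h p x ≤ (∑ k ∈ Finset.range N, h (xs k) (us k)) + p (xs N) := by
  apply csInf_le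
  · refine ⟨0, ?_⟩
    rintro s ⟨u', xs', _, rfl⟩
    exact add_nonneg (Finset.sum_nonneg fun _ _ => hpos _ _) (hppos _)
  · exact ⟨us, xs, hf, rfl⟩

end Aux

/-- Theorem 2, non-increasing iteration cost: the cost of the LMPC
closed-loop iteration does not exceed the cost of the stored previous iteration. -/
theorem lmpc_iteration_cost_nonincreasing
    {n m : ℕ} {ι : Type*} [Fintype ι] [Nonempty ι]
    (A : Matrix (Fin n) (Fin n) ℝ) (B : Matrix (Fin n) (Fin m) ℝ)
    (X : Set (Fin n → ℝ)) (hX : Convex ℝ X)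
    (U : Set (Fin m → ℝ)) (hU : Convex ℝ U)
    (h : (Fin n → ℝ) → (Fin m → ℝ) → ℝ)
    (hconv : ConvexOn ℝ Set.univ (fun q : (Fin n → ℝ) × (Fin m → ℝ) => h q.1 q.2))
    (hpos : ∀ x u, 0 ≤ h x u)
    (z : ι → Fin n → ℝ) (hz : ∀ i, z i ∈ X)
    (v : ι → Fin m → ℝ) (hv : ∀ i, v i ∈ U)
    (σ : ι → ι) (hσ : ∀ i, z (σ i) = A.mulVec (z i) + B.mulVec (v i))
    (c : ι → ℝ) (hcpos : ∀ i, 0 ≤ c i) (hc : ∀ i, c i = h (z i) (v i) + c (σ i))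
    (N : ℕ) (hN : 1 ≤ N)
    -- the previous iteration trajectory, satisfying dynamics and constraints, is stored
    (T : ℕ) (hT : N ≤ T)
    (xprev : ℕ → Fin n → ℝ) (uprev : ℕ → Fin m → ℝ)
    (hdynp : ∀ t < T, xprev (t + 1) = A.mulVec (xprev t) + B.mulVec (uprev t))
    (hxXp : ∀ t ≤ T, xprev t ∈ X) (huUp : ∀ t < T, uprev t ∈ U)
    (hstored : ∀ t ≤ T, ∃ i : ι, z i = xprev t ∧
      c i = ∑ l ∈ Finset.Ico t T, h (xprev l) (uprev l))
    -- the closed-loop sequences of the new iteration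
    (x : ℕ → Fin n → ℝ) (u : ℕ → Fin m → ℝ)
    (hx0 : x 0 = xprev 0)
    (hcl : ∀ t, ∃ us xs,
      Feasible A B X U (convexHull ℝ (Set.range z)) N (x t) us xs ∧
      us 0 = u t ∧
      (∑ k ∈ Finset.range N, h (xs k) (us k)) + barycentric z c (xs N) =
        lmpcValue A B X U (convexHull ℝ (Set.range z)) N h (barycentric z c) (x t))
    (hdyn : ∀ t, x (t + 1) = A.mulVec (x t) + B.mulVec (u t)) :
    Summable (fun t => h (x t) (u t)) ∧
      (∑' t, h (x t) (u t)) ≤ ∑ t ∈ Finset.range T, h (xprev t) (uprev t) := by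
  classical
  obtain ⟨M, rfl⟩ : ∃ M, N = M + 1 := ⟨N - 1, (Nat.succ_pred_eq_of_pos hN).symm⟩
  set CS := convexHull ℝ (Set.range z) with hCSdef
  have hppos : ∀ y, 0 ≤ barycentric z c y := aux_barycentric_nonneg z c hcpos
  have hCSX : CS ⊆ X := convexHull_min (by rintro _ ⟨i, rfl⟩; exact hz i) hX
  have hQpos : ∀ y, 0 ≤ lmpcValue A B X U CS (M + 1) h (barycentric z c) y :=
    aux_lmpcValue_nonneg A B X U CS (M + 1) h (barycentric z c) hpos hppos
  -- the key descent property
  have hdesc : ∀ t, lmpcValue A B X U CS (M + 1) h (barycentric z c) (x (t + 1))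
      + h (x t) (u t) ≤ lmpcValue A B X U CS (M + 1) h (barycentric z c) (x t) := by
    intro t
    obtain ⟨us, xs, hfeas, hus0, hcost⟩ := hcl t
    obtain ⟨hxs0, hdyns, hxsX, husU, hxsN⟩ := hfeas
    rw [← hcost]
    apply le_of_forall_pos_le_add
    intro ε hε
    -- ε-optimal barycentric weights at the terminal point
    have hSne : {s : ℝ | ∃ lam : ι → ℝ, (∀ i, 0 ≤ lam i) ∧ (∑ i, lam i) = 1 ∧
        (∑ i, lam i • z i) = xs (M + 1) ∧ s = ∑ i, lam i * c i}.Nonempty := by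
      obtain ⟨lam0, hl0, hl1, hl2⟩ := aux_exists_lam_of_mem_convexHull z hxsN
      exact ⟨_, lam0, hl0, hl1, hl2, rfl⟩
    obtain ⟨a, haS, halt⟩ := Real.lt_sInf_add_pos hSne hε
    obtain ⟨lam, hlam0, hlam1, hlamz, rfl⟩ := haS
    have hpeq : barycentric z c (xs (M + 1)) = sInf {s : ℝ | ∃ lam : ι → ℝ,
        (∀ i, 0 ≤ lam i) ∧ (∑ i, lam i) = 1 ∧
        (∑ i, lam i • z i) = xs (M + 1) ∧ s = ∑ i, lam i * c i} := rfl
    rw [← hpeq] at halt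
    -- the shifted candidate solution at `x (t+1)`
    set ubar : Fin m → ℝ := ∑ i, lam i • v i with hubar
    set us' : ℕ → Fin m → ℝ := fun k => if k + 1 < M + 1 then us (k + 1) else ubar with hus'
    set xs' : ℕ → Fin n → ℝ := fun k => if k < M + 1 then xs (k + 1)
      else ∑ i, lam i • z (σ i) with hxs'
    have hubarU : ubar ∈ U :=
      hU.sum_mem (fun i _ => hlam0 i) (by simpa using hlam1) (fun i _ => hv i)
    have hterm : (∑ i, lam i • z (σ i)) = A.mulVec (xs (M + 1)) + B.mulVec ubar := by
      rw [← hlamz, hubar, aux_mulVec_sum_smul, aux_mulVec_sum_smul,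
        ← Finset.sum_add_distrib]
      refine Finset.sum_congr rfl fun i _ => ?_
      rw [← smul_add, ← hσ i]
    have hfeas' : Feasible A B X U CS (M + 1) (x (t + 1)) us' xs' := by
      refine ⟨?_, ?_, ?_, ?_, ?_⟩
      · show (if 0 < M + 1 then xs (0 + 1) else _) = x (t + 1)
        rw [if_pos (Nat.succ_pos M), hdyn t, ← hxs0, ← hus0]
        exact hdyns 0 (Nat.succ_pos M)
      · intro k hk
        by_cases hk1 : k + 1 < M + 1
        · show (if k + 1 < M + 1 then xs (k + 1 + 1) else _) =
            A.mulVec (if k < M + 1 then xs (k + 1) else _) +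
              B.mulVec (if k + 1 < M + 1 then us (k + 1) else _)
          rw [if_pos hk1, if_pos hk, if_pos hk1]
          exact hdyns (k + 1) hk1
        · have hkM : M = k := by omega
          subst hkM
          show (if M + 1 < M + 1 then _ else ∑ i, lam i • z (σ i)) =
            A.mulVec (if M < M + 1 then xs (M + 1) else _) +
              B.mulVec (if M + 1 < M + 1 then _ else ubar)
          rw [if_neg (lt_irrefl _), if_pos (Nat.lt_succ_self M), if_neg (lt_irrefl _)]
          exact hterm
      · intro k hk
        show (if k < M + 1 then xs (k + 1) else _) ∈ X
        rw [if_pos hk]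
        by_cases hk1 : k + 1 < M + 1
        · exact hxsX (k + 1) hk1
        · have : k + 1 = M + 1 := by omega
          rw [this]
          exact hCSX hxsN
      · intro k hk
        show (if k + 1 < M + 1 then us (k + 1) else ubar) ∈ U
        by_cases hk1 : k + 1 < M + 1
        · rw [if_pos hk1]; exact husU (k + 1) hk1
        · rw [if_neg hk1]; exact hubarU
      · show (if M + 1 < M + 1 then _ else ∑ i, lam i • z (σ i)) ∈ CS
        rw [if_neg (lt_irrefl _)]
        exact (convex_convexHull ℝ (Set.range z)).sum_mem (fun i _ => hlam0 i)
          (by simpa using hlam1)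
          (fun i _ => subset_convexHull ℝ (Set.range z) ⟨σ i, rfl⟩)
    have hle := aux_lmpcValue_le A B X U CS (M + 1) h (barycentric z c) hpos hppos
      (x (t + 1)) us' xs' hfeas'
    -- compute the candidate cost
    have hxs'N : xs' (M + 1) = ∑ i, lam i • z (σ i) := by
      show (if M + 1 < M + 1 then _ else _) = _
      rw [if_neg (lt_irrefl _)]
    have hsum' : (∑ k ∈ Finset.range (M + 1), h (xs' k) (us' k)) =
        (∑ k ∈ Finset.range M, h (xs (k + 1)) (us (k + 1))) + h (xs (M + 1)) ubar := by
      rw [Finset.sum_range_succ]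
      congr 1
      · refine Finset.sum_congr rfl fun k hk => ?_
        have hk' : k < M := Finset.mem_range.mp hk
        have h1 : k < M + 1 := Nat.lt_succ_of_lt hk'
        have h2 : k + 1 < M + 1 := Nat.succ_lt_succ hk'
        show h (if k < M + 1 then xs (k + 1) else _)
            (if k + 1 < M + 1 then us (k + 1) else _) = _
        rw [if_pos h1, if_pos h2]
      · show h (if M < M + 1 then xs (M + 1) else _)
            (if M + 1 < M + 1 then _ else ubar) = _
        rw [if_pos (Nat.lt_succ_self M), if_neg (lt_irrefl _)]
    -- Jensen's inequality for the stage cost at the terminal step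
    have hjensen : h (xs (M + 1)) ubar ≤ ∑ i, lam i * h (z i) (v i) := by
      have hpt : (∑ i, lam i • ((z i, v i) : (Fin n → ℝ) × (Fin m → ℝ))) =
          (xs (M + 1), ubar) := by
        rw [Prod.ext_iff]
        constructor
        · rw [Prod.fst_sum]
          simp only [Prod.smul_fst]
          exact hlamz
        · rw [Prod.snd_sum]
          simp only [Prod.smul_snd]
          exact hubar.symm
      have := hconv.map_sum_le (t := Finset.univ) (w := lam)
        (p := fun i => ((z i, v i) : (Fin n → ℝ) × (Fin m → ℝ)))
        (fun i _ => hlam0 i) hlam1 (fun i _ => Set.mem_univ _)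
      rw [hpt] at this
      simpa [smul_eq_mul] using this
    have hpterm : barycentric z c (xs' (M + 1)) ≤ ∑ i, lam i * c (σ i) := by
      rw [hxs'N]
      exact aux_barycentric_comp z c hcpos σ lam hlam0 hlam1
    have hcombine : (∑ i, lam i * h (z i) (v i)) + (∑ i, lam i * c (σ i)) =
        ∑ i, lam i * c i := by
      rw [← Finset.sum_add_distrib]
      refine Finset.sum_congr rfl fun i _ => ?_
      rw [← mul_add, ← hc i]
    have hshift : (∑ k ∈ Finset.range (M + 1), h (xs k) (us k)) =
        (∑ k ∈ Finset.range M, h (xs (k + 1)) (us (k + 1))) + h (xs 0) (us 0) :=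
      Finset.sum_range_succ' _ M
    have hxu0 : h (x t) (u t) = h (xs 0) (us 0) := by rw [hxs0, hus0]
    rw [hsum'] at hle
    rw [hshift, hxu0]
    linarith
  -- partial-sum bound by induction
  have hsum : ∀ t, (∑ k ∈ Finset.range t, h (x k) (u k)) +
      lmpcValue A B X U CS (M + 1) h (barycentric z c) (x t) ≤
      lmpcValue A B X U CS (M + 1) h (barycentric z c) (x 0) := by
    intro t
    induction t with
    | zero => simp
    | succ t ih =>
      rw [Finset.sum_range_succ]
      have := hdesc t
      linarith
  -- the previous trajectory is feasible at `x 0`, bounding `Q (x 0)`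
  obtain ⟨iN, hziN, hciN⟩ := hstored (M + 1) hT
  have hfeasp : Feasible A B X U CS (M + 1) (x 0) uprev xprev := by
    refine ⟨hx0.symm, fun k hk => hdynp k (lt_of_lt_of_le hk hT),
      fun k hk => hxXp k (le_of_lt (lt_of_lt_of_le hk hT)),
      fun k hk => huUp k (lt_of_lt_of_le hk hT), ?_⟩
    exact subset_convexHull ℝ (Set.range z) ⟨iN, hziN⟩
  have hQ0 : lmpcValue A B X U CS (M + 1) h (barycentric z c) (x 0) ≤
      ∑ t ∈ Finset.range T, h (xprev t) (uprev t) := by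
    have h1 := aux_lmpcValue_le A B X U CS (M + 1) h (barycentric z c) hpos hppos
      (x 0) uprev xprev hfeasp
    have h2 : barycentric z c (xprev (M + 1)) ≤ c iN := by
      rw [← hziN]
      have := aux_barycentric_le z c hcpos (fun j => if j = iN then 1 else 0)
        (fun j => by split_ifs <;> norm_num) (by simp)
      simpa using this
    have h3 : (∑ k ∈ Finset.range (M + 1), h (xprev k) (uprev k)) +
        (∑ l ∈ Finset.Ico (M + 1) T, h (xprev l) (uprev l)) =
        ∑ t ∈ Finset.range T, h (xprev t) (uprev t) :=
      Finset.sum_range_add_sum_Ico _ hT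
    rw [hciN] at h2
    linarith
  have hbound : ∀ t, (∑ k ∈ Finset.range t, h (x k) (u k)) ≤
      ∑ t ∈ Finset.range T, h (xprev t) (uprev t) := by
    intro t
    have h1 := hsum t
    have h2 := hQpos (x t)
    linarith
  have hsummable : Summable (fun t => h (x t) (u t)) :=
    summable_of_sum_range_le (fun t => hpos _ _) hbound
  exact ⟨hsummable, Summable.tsum_le_of_sum_range_le hsummable hbound⟩
end

section
/- Let A be an n×n real matrix, B an n×m real matrix, X ⊆ ℝ^n and U ⊆ ℝ^m convex sets, and h : ℝ^n × ℝ^m → ℝ jointly convex and nonnegative. Let I be a finite nonempty index set with stored states z : I → ℝ^n and stored costs c : I → ℝ, p the barycentric cost function from z and c, CS = convexHull ℝ {z i : i ∈ I}, and Q the LMPC value function with horizon N ≥ 1. Then the set D of feasible initial states (states x for which the LMPC problem admits a feasible solution) is a convex subset of ℝ^n, and Q is convex on D, i.e., ConvexOn ℝ D Q. -/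
section aux

open Finset

variable {n m : ℕ} {ι : Type*} [Fintype ι] [Nonempty ι]

/-- Membership in the convex hull of a finite range via simplex weights. -/
lemma mem_hull_iff' (z : ι → Fin n → ℝ) (x : Fin n → ℝ) :
    x ∈ convexHull ℝ (Set.range z) ↔
      ∃ lam : ι → ℝ, (∀ i, 0 ≤ lam i) ∧ (∑ i, lam i) = 1 ∧ (∑ i, lam i • z i) = x := by
  classical
  constructor
  · intro hx
    have hsub : convexHull ℝ (Set.range z) ⊆
        {x | ∃ lam : ι → ℝ, (∀ i, 0 ≤ lam i) ∧ (∑ i, lam i) = 1 ∧ (∑ i, lam i • z i) = x} := by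
      apply convexHull_min
      · rintro _ ⟨i, rfl⟩
        refine ⟨fun j => if j = i then 1 else 0, ?_, ?_, ?_⟩
        · intro j; dsimp only; split_ifs <;> norm_num
        · simp
        · simp [ite_smul]
      · rintro p ⟨lam, h0, h1, h2⟩ q ⟨mu, g0, g1, g2⟩ a b ha hb hab
        refine ⟨fun i => a * lam i + b * mu i, ?_, ?_, ?_⟩
        · intro i; have := h0 i; have := g0 i; positivity
        · simp [Finset.sum_add_distrib, ← Finset.mul_sum, h1, g1, hab]
        · simp only [add_smul, mul_smul, Finset.sum_add_distrib, ← Finset.smul_sum, h2, g2]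
    exact hsub hx
  · rintro ⟨lam, h0, h1, rfl⟩
    have := Finset.centerMass_mem_convexHull (t := Finset.univ) (w := lam) (z := z)
      (s := Set.range z) (fun i _ => h0 i) (by rw [h1]; norm_num)
      (fun i _ => Set.mem_range_self i)
    simpa [Finset.centerMass, h1] using this

/-- The set whose infimum defines `barycentric`. -/
def barySet (z : ι → Fin n → ℝ) (c : ι → ℝ) (x : Fin n → ℝ) : Set ℝ :=
  {s : ℝ | ∃ lam : ι → ℝ, (∀ i, 0 ≤ lam i) ∧ (∑ i, lam i) = 1 ∧
    (∑ i, lam i • z i) = x ∧ s = ∑ i, lam i * c i}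

lemma barycentric_eq (z : ι → Fin n → ℝ) (c : ι → ℝ) (x : Fin n → ℝ) :
    barycentric z c x = sInf (barySet z c x) := rfl

lemma barySet_lb (z : ι → Fin n → ℝ) (c : ι → ℝ) (x : Fin n → ℝ) :
    ∀ s ∈ barySet z c x, Finset.univ.inf' Finset.univ_nonempty c ≤ s := by
  rintro s ⟨lam, h0, h1, -, rfl⟩
  calc Finset.univ.inf' Finset.univ_nonempty c
      = ∑ i, lam i * Finset.univ.inf' Finset.univ_nonempty c := by
        rw [← Finset.sum_mul, h1, one_mul]
    _ ≤ ∑ i, lam i * c i := by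
        refine Finset.sum_le_sum fun i _ => ?_
        exact mul_le_mul_of_nonneg_left (Finset.inf'_le _ (Finset.mem_univ i)) (h0 i)

lemma barySet_bddBelow (z : ι → Fin n → ℝ) (c : ι → ℝ) (x : Fin n → ℝ) :
    BddBelow (barySet z c x) :=
  ⟨_, barySet_lb z c x⟩

lemma barySet_nonempty (z : ι → Fin n → ℝ) (c : ι → ℝ) {x : Fin n → ℝ}
    (hx : x ∈ convexHull ℝ (Set.range z)) : (barySet z c x).Nonempty := by
  obtain ⟨lam, h0, h1, h2⟩ := (mem_hull_iff' z x).mp hx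
  exact ⟨_, lam, h0, h1, h2, rfl⟩

lemma cmin_le_barycentric (z : ι → Fin n → ℝ) (c : ι → ℝ) {x : Fin n → ℝ}
    (hx : x ∈ convexHull ℝ (Set.range z)) :
    Finset.univ.inf' Finset.univ_nonempty c ≤ barycentric z c x :=
  le_csInf (barySet_nonempty z c hx) (barySet_lb z c x)

lemma barySet_combine (z : ι → Fin n → ℝ) (c : ι → ℝ) {x y : Fin n → ℝ}
    {a b s t : ℝ} (ha : 0 ≤ a) (hb : 0 ≤ b) (hab : a + b = 1)
    (hs : s ∈ barySet z c x) (ht : t ∈ barySet z c y) :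
    a * s + b * t ∈ barySet z c (a • x + b • y) := by
  obtain ⟨lam, h0, h1, h2, rfl⟩ := hs
  obtain ⟨mu, g0, g1, g2, rfl⟩ := ht
  refine ⟨fun i => a * lam i + b * mu i, ?_, ?_, ?_, ?_⟩
  · intro i; have := h0 i; have := g0 i; positivity
  · simp [Finset.sum_add_distrib, ← Finset.mul_sum, h1, g1, hab]
  · simp only [add_smul, mul_smul, Finset.sum_add_distrib, ← Finset.smul_sum, h2, g2]
  · rw [Finset.mul_sum, Finset.mul_sum, ← Finset.sum_add_distrib]
    exact Finset.sum_congr rfl fun i _ => by ring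

lemma barycentric_combine (z : ι → Fin n → ℝ) (c : ι → ℝ) {x y : Fin n → ℝ}
    {a b : ℝ} (ha : 0 ≤ a) (hb : 0 ≤ b) (hab : a + b = 1)
    (hx : x ∈ convexHull ℝ (Set.range z)) (hy : y ∈ convexHull ℝ (Set.range z)) :
    barycentric z c (a • x + b • y) ≤ a * barycentric z c x + b * barycentric z c y := by
  refine le_of_forall_pos_le_add fun ε hε => ?_
  obtain ⟨s, hs, hslt⟩ := Real.lt_sInf_add_pos (barySet_nonempty z c hx) hε
  obtain ⟨t, ht, htlt⟩ := Real.lt_sInf_add_pos (barySet_nonempty z c hy) hε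
  have hmem := barySet_combine z c ha hb hab hs ht
  calc barycentric z c (a • x + b • y) ≤ a * s + b * t :=
        csInf_le (barySet_bddBelow z c _) hmem
    _ ≤ a * (sInf (barySet z c x) + ε) + b * (sInf (barySet z c y) + ε) := by
        exact add_le_add (mul_le_mul_of_nonneg_left hslt.le ha)
          (mul_le_mul_of_nonneg_left htlt.le hb)
    _ = a * barycentric z c x + b * barycentric z c y + ε := by
        rw [barycentric_eq, barycentric_eq]; nlinarith [hab]

lemma feasible_combine {A : Matrix (Fin n) (Fin n) ℝ} {B : Matrix (Fin n) (Fin m) ℝ}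
    {X : Set (Fin n → ℝ)} {U : Set (Fin m → ℝ)} {CS : Set (Fin n → ℝ)}
    (hX : Convex ℝ X) (hU : Convex ℝ U) (hCS : Convex ℝ CS) {N : ℕ}
    {x y : Fin n → ℝ} {u u' : ℕ → Fin m → ℝ} {xs xs' : ℕ → Fin n → ℝ}
    {a b : ℝ} (ha : 0 ≤ a) (hb : 0 ≤ b) (hab : a + b = 1)
    (h1 : Feasible A B X U CS N x u xs) (h2 : Feasible A B X U CS N y u' xs') :
    Feasible A B X U CS N (a • x + b • y) (fun k => a • u k + b • u' k)
      (fun k => a • xs k + b • xs' k) := by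
  obtain ⟨hx0, hxd, hxX, hxU, hxCS⟩ := h1
  obtain ⟨hy0, hyd, hyX, hyU, hyCS⟩ := h2
  refine ⟨by dsimp only; rw [hx0, hy0], fun k hk => ?_, fun k hk => hX (hxX k hk) (hyX k hk) ha hb hab,
    fun k hk => hU (hxU k hk) (hyU k hk) ha hb hab, hCS hxCS hyCS ha hb hab⟩
  dsimp only
  rw [hxd k hk, hyd k hk, Matrix.mulVec_add, Matrix.mulVec_smul, Matrix.mulVec_smul,
    Matrix.mulVec_add, Matrix.mulVec_smul, Matrix.mulVec_smul]
  module

/-- The set whose infimum defines `lmpcValue`. -/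
def lmpcSet (A : Matrix (Fin n) (Fin n) ℝ) (B : Matrix (Fin n) (Fin m) ℝ)
    (X : Set (Fin n → ℝ)) (U : Set (Fin m → ℝ)) (CS : Set (Fin n → ℝ)) (N : ℕ)
    (h : (Fin n → ℝ) → (Fin m → ℝ) → ℝ) (p : (Fin n → ℝ) → ℝ) (x : Fin n → ℝ) : Set ℝ :=
  {s : ℝ | ∃ u xs, Feasible A B X U CS N x u xs ∧
    s = (∑ k ∈ Finset.range N, h (xs k) (u k)) + p (xs N)}

lemma lmpcValue_eq (A : Matrix (Fin n) (Fin n) ℝ) (B : Matrix (Fin n) (Fin m) ℝ)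
    (X : Set (Fin n → ℝ)) (U : Set (Fin m → ℝ)) (CS : Set (Fin n → ℝ)) (N : ℕ)
    (h : (Fin n → ℝ) → (Fin m → ℝ) → ℝ) (p : (Fin n → ℝ) → ℝ) (x : Fin n → ℝ) :
    lmpcValue A B X U CS N h p x = sInf (lmpcSet A B X U CS N h p x) := rfl

end aux

/-- The set of feasible initial states of the LMPC is convex, and the
LMPC value function is convex on it. -/
theorem lmpc_value_convexOn
    {n m : ℕ} {ι : Type*} [Fintype ι] [Nonempty ι]
    (A : Matrix (Fin n) (Fin n) ℝ) (B : Matrix (Fin n) (Fin m) ℝ)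
    (X : Set (Fin n → ℝ)) (hX : Convex ℝ X)
    (U : Set (Fin m → ℝ)) (hU : Convex ℝ U)
    (h : (Fin n → ℝ) → (Fin m → ℝ) → ℝ)
    (hconv : ConvexOn ℝ Set.univ (fun q : (Fin n → ℝ) × (Fin m → ℝ) => h q.1 q.2))
    (hpos : ∀ x u, 0 ≤ h x u)
    (z : ι → Fin n → ℝ) (c : ι → ℝ)
    (N : ℕ) (hN : 1 ≤ N) :
    Convex ℝ {x : Fin n → ℝ |
        ∃ u xs, Feasible A B X U (convexHull ℝ (Set.range z)) N x u xs} ∧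
      ConvexOn ℝ
        {x : Fin n → ℝ |
          ∃ u xs, Feasible A B X U (convexHull ℝ (Set.range z)) N x u xs}
        (lmpcValue A B X U (convexHull ℝ (Set.range z)) N h (barycentric z c)) := by
  set CS := convexHull ℝ (Set.range z) with hCSdef
  have hCS : Convex ℝ CS := convex_convexHull ℝ _
  set D := {x : Fin n → ℝ | ∃ u xs, Feasible A B X U CS N x u xs} with hDdef
  have hDconv : Convex ℝ D := by
    rintro x ⟨u, xs, hx⟩ y ⟨u', xs', hy⟩ a b ha hb hab
    exact ⟨_, _, feasible_combine hX hU hCS ha hb hab hx hy⟩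
  refine ⟨hDconv, hDconv, ?_⟩
  intro x hx y hy a b ha hb hab
  -- lower bound and nonemptiness of the LMPC candidate sets
  set M := Finset.univ.inf' Finset.univ_nonempty c with hM
  have hlb : ∀ w : Fin n → ℝ, ∀ s ∈ lmpcSet A B X U CS N h (barycentric z c) w, M ≤ s := by
    rintro w s ⟨u, xs, hf, rfl⟩
    have h1 : M ≤ barycentric z c (xs N) := cmin_le_barycentric z c hf.2.2.2.2
    have h2 : 0 ≤ ∑ k ∈ Finset.range N, h (xs k) (u k) :=
      Finset.sum_nonneg fun k _ => hpos _ _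
    linarith
  have hbdd : ∀ w, BddBelow (lmpcSet A B X U CS N h (barycentric z c) w) :=
    fun w => ⟨M, hlb w⟩
  have hne : ∀ w ∈ D, (lmpcSet A B X U CS N h (barycentric z c) w).Nonempty := by
    rintro w ⟨u, xs, hf⟩
    exact ⟨_, u, xs, hf, rfl⟩
  -- stage cost convexity
  have hstage : ∀ (x1 x2 : Fin n → ℝ) (u1 u2 : Fin m → ℝ),
      h (a • x1 + b • x2) (a • u1 + b • u2) ≤ a * h x1 u1 + b * h x2 u2 := by
    intro x1 x2 u1 u2
    have := hconv.2 (Set.mem_univ ((x1, u1) : (Fin n → ℝ) × (Fin m → ℝ)))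
      (Set.mem_univ ((x2, u2) : (Fin n → ℝ) × (Fin m → ℝ))) ha hb hab
    simpa [Prod.smul_mk, Prod.mk_add_mk, smul_eq_mul] using this
  refine le_of_forall_pos_le_add fun ε hε => ?_
  obtain ⟨s, hs, hslt⟩ := Real.lt_sInf_add_pos (hne x hx) hε
  obtain ⟨t, ht, htlt⟩ := Real.lt_sInf_add_pos (hne y hy) hε
  obtain ⟨u, xs, hfx, rfl⟩ := hs
  obtain ⟨u', xs', hfy, rfl⟩ := ht
  have hfz := feasible_combine hX hU hCS ha hb hab hfx hfy
  have hmem : ((∑ k ∈ Finset.range N, h (a • xs k + b • xs' k) (a • u k + b • u' k)) +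
      barycentric z c (a • xs N + b • xs' N)) ∈
      lmpcSet A B X U CS N h (barycentric z c) (a • x + b • y) := ⟨_, _, hfz, rfl⟩
  have hcost : (∑ k ∈ Finset.range N, h (a • xs k + b • xs' k) (a • u k + b • u' k)) +
      barycentric z c (a • xs N + b • xs' N) ≤
      a * ((∑ k ∈ Finset.range N, h (xs k) (u k)) + barycentric z c (xs N)) +
      b * ((∑ k ∈ Finset.range N, h (xs' k) (u' k)) + barycentric z c (xs' N)) := by
    have hsum : (∑ k ∈ Finset.range N, h (a • xs k + b • xs' k) (a • u k + b • u' k)) ≤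
        a * (∑ k ∈ Finset.range N, h (xs k) (u k)) +
        b * (∑ k ∈ Finset.range N, h (xs' k) (u' k)) := by
      rw [Finset.mul_sum, Finset.mul_sum, ← Finset.sum_add_distrib]
      exact Finset.sum_le_sum fun k _ => hstage _ _ _ _
    have hterm := barycentric_combine z c ha hb hab hfx.2.2.2.2 hfy.2.2.2.2
    nlinarith
  have hQle : lmpcValue A B X U CS N h (barycentric z c) (a • x + b • y) ≤
      (∑ k ∈ Finset.range N, h (a • xs k + b • xs' k) (a • u k + b • u' k)) +
      barycentric z c (a • xs N + b • xs' N) := csInf_le (hbdd _) hmem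
  have hsx : lmpcValue A B X U CS N h (barycentric z c) x =
      sInf (lmpcSet A B X U CS N h (barycentric z c) x) := rfl
  have hsy : lmpcValue A B X U CS N h (barycentric z c) y =
      sInf (lmpcSet A B X U CS N h (barycentric z c) y) := rfl
  have := hslt.le
  have := htlt.le
  calc lmpcValue A B X U CS N h (barycentric z c) (a • x + b • y)
      ≤ a * ((∑ k ∈ Finset.range N, h (xs k) (u k)) + barycentric z c (xs N)) +
        b * ((∑ k ∈ Finset.range N, h (xs' k) (u' k)) + barycentric z c (xs' N)) :=
        le_trans hQle hcost
    _ ≤ a * (sInf (lmpcSet A B X U CS N h (barycentric z c) x) + ε) +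
        b * (sInf (lmpcSet A B X U CS N h (barycentric z c) y) + ε) :=
        add_le_add (mul_le_mul_of_nonneg_left hslt.le ha)
          (mul_le_mul_of_nonneg_left htlt.le hb)
    _ = a * lmpcValue A B X U CS N h (barycentric z c) x +
        b * lmpcValue A B X U CS N h (barycentric z c) y + ε := by
        rw [hsx, hsy]; nlinarith [hab]
  -- goal shape: a • Q x + b • Q y
end

section
/- Let I ⊆ I' be finite nonempty index sets, z' : I' → ℝ^n and c' : I' → ℝ, and let z, c be the restrictions of z', c' to I. Let p and p' be the barycentric cost functions built from (z, c) and (z', c') respectively. Then for every x in the convex hull of {z i : i ∈ I} one has p'(x) ≤ p(x). Consequently, for fixed A, B, X, U, h and horizon N, the LMPC value functions Q (with terminal set convexHull ℝ {z i : i ∈ I} and terminal cost p) and Q' (with terminal set convexHull ℝ {z' i : i ∈ I'} and terminal cost p') satisfy Q'(x) ≤ Q(x) at every state x that is feasible for the problem defining Q, provided h ≥ 0 and c' i ≥ 0 for all i ∈ I'. -/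
/-- The barycentric cost function built from the stored points `z i` and stored costs
`c i` for indices `i` in the finite index set `S`:
`p(x) = sInf { ∑ i ∈ S, λ i * c i : λ ≥ 0 on S, ∑_{i ∈ S} λ i = 1, ∑_{i ∈ S} λ i • z i = x }`. -/
noncomputable def barycentricOn {n : ℕ} {ι : Type*} (S : Finset ι)
    (z : ι → Fin n → ℝ) (c : ι → ℝ) (x : Fin n → ℝ) : ℝ :=
  sInf {s : ℝ | ∃ lam : ι → ℝ, (∀ i ∈ S, 0 ≤ lam i) ∧ (∑ i ∈ S, lam i) = 1 ∧
    (∑ i ∈ S, lam i • z i) = x ∧ s = ∑ i ∈ S, lam i * c i}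

lemma exists_lam_of_mem_convexHull {n : ℕ} {ι : Type*} (I : Finset ι) (hIne : I.Nonempty)
    (z : ι → Fin n → ℝ) {x : Fin n → ℝ} (hx : x ∈ convexHull ℝ (z '' ↑I)) :
    ∃ lam : ι → ℝ, (∀ i ∈ I, 0 ≤ lam i) ∧ (∑ i ∈ I, lam i) = 1 ∧
      (∑ i ∈ I, lam i • z i) = x := by
  classical
  rw [convexHull_eq] at hx
  obtain ⟨κ, t, w, f, hw0, hw1, hfz, hcm⟩ := hx
  have hg : ∀ i : κ, ∃ j : ι, (i ∈ t → j ∈ I ∧ z j = f i) := by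
    intro i
    by_cases hi : i ∈ t
    · obtain ⟨j, hj, hjz⟩ := hfz i hi
      exact ⟨j, fun _ => ⟨hj, hjz⟩⟩
    · exact ⟨hIne.choose, fun h => absurd h hi⟩
  choose g hgI using hg
  refine ⟨fun j => ∑ i ∈ t with g i = j, w i, ?_, ?_, ?_⟩
  · intro j hj
    exact Finset.sum_nonneg fun i hi => hw0 i (Finset.mem_filter.1 hi).1
  · rw [Finset.sum_fiberwise_of_maps_to (fun i hi => (hgI i hi).1) w, hw1]
  · have : ∀ j ∈ I, (∑ i ∈ t with g i = j, w i) • z j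
        = ∑ i ∈ t with g i = j, w i • f i := by
      intro j _
      rw [Finset.sum_smul]
      refine Finset.sum_congr rfl fun i hi => ?_
      obtain ⟨hit, hgij⟩ := Finset.mem_filter.1 hi
      rw [← hgij, (hgI i hit).2]
    rw [Finset.sum_congr rfl this,
      Finset.sum_fiberwise_of_maps_to (fun i hi => (hgI i hi).1) (fun i => w i • f i),
      ← Finset.centerMass_eq_of_sum_1 _ _ hw1, hcm]

lemma barycentricOn_nonneg {n : ℕ} {ι : Type*} (S : Finset ι)
    (z : ι → Fin n → ℝ) (c : ι → ℝ) (hc : ∀ i ∈ S, 0 ≤ c i) (x : Fin n → ℝ) :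
    0 ≤ barycentricOn S z c x := by
  refine Real.sInf_nonneg fun s hs => ?_
  obtain ⟨lam, hl0, -, -, rfl⟩ := hs
  exact Finset.sum_nonneg fun i hi => mul_nonneg (hl0 i hi) (hc i hi)

lemma barycentricOn_mono {n : ℕ} {ι : Type*} (I I' : Finset ι) (hIne : I.Nonempty)
    (hII' : I ⊆ I') (z : ι → Fin n → ℝ) (c : ι → ℝ) (hcpos : ∀ i ∈ I', 0 ≤ c i)
    {x : Fin n → ℝ} (hx : x ∈ convexHull ℝ (z '' ↑I)) :
    barycentricOn I' z c x ≤ barycentricOn I z c x := by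
  classical
  refine csInf_le_csInf ⟨0, fun s hs => ?_⟩ ?_ ?_
  · obtain ⟨lam, hl0, -, -, rfl⟩ := hs
    exact Finset.sum_nonneg fun i hi => mul_nonneg (hl0 i hi) (hcpos i hi)
  · obtain ⟨lam, h0, h1, h2⟩ := exists_lam_of_mem_convexHull I hIne z hx
    exact ⟨_, lam, h0, h1, h2, rfl⟩
  · rintro s ⟨lam, h0, h1, h2, rfl⟩
    refine ⟨fun i => if i ∈ I then lam i else 0, fun i _ => ?_, ?_, ?_, ?_⟩
    · dsimp only
      split
      · exact h0 _ ‹_›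
      · exact le_rfl
    · rw [← Finset.sum_subset hII' (fun i _ hi => if_neg hi)]
      simpa using h1
    · rw [← Finset.sum_subset hII' (fun i _ hi => by simp [if_neg hi])]
      simpa using h2
    · rw [← Finset.sum_subset hII' (fun i _ hi => by simp [if_neg hi])]
      exact Finset.sum_congr rfl fun i hi => by simp [if_pos hi]

/-- Enlarging the sampled safe set from index set `I` to `I' ⊇ I` can only
decrease the barycentric terminal cost (on the old convex safe set) and the LMPC value
function (at states feasible for the old problem). -/
theorem enlarging_safe_set_decreases_cost
    {n m : ℕ} {ι : Type*} (I I' : Finset ι) (hIne : I.Nonempty) (hII' : I ⊆ I')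
    (z : ι → Fin n → ℝ) (c : ι → ℝ)
    (A : Matrix (Fin n) (Fin n) ℝ) (B : Matrix (Fin n) (Fin m) ℝ)
    (X : Set (Fin n → ℝ)) (U : Set (Fin m → ℝ))
    (h : (Fin n → ℝ) → (Fin m → ℝ) → ℝ) (hpos : ∀ x u, 0 ≤ h x u)
    (hcpos : ∀ i ∈ I', 0 ≤ c i)
    (N : ℕ) (hN : 1 ≤ N) :
    (∀ x ∈ convexHull ℝ (z '' ↑I), barycentricOn I' z c x ≤ barycentricOn I z c x) ∧
    (∀ x : Fin n → ℝ,
      (∃ u xs, Feasible A B X U (convexHull ℝ (z '' ↑I)) N x u xs) →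
      lmpcValue A B X U (convexHull ℝ (z '' ↑I')) N h (barycentricOn I' z c) x ≤
        lmpcValue A B X U (convexHull ℝ (z '' ↑I)) N h (barycentricOn I z c) x) := by
  classical
  have part1 : ∀ x ∈ convexHull ℝ (z '' ↑I),
      barycentricOn I' z c x ≤ barycentricOn I z c x :=
    fun x hx => barycentricOn_mono I I' hIne hII' z c hcpos hx
  refine ⟨part1, ?_⟩
  rintro x ⟨u, xs, hfeas⟩
  have hmono : convexHull ℝ (z '' ↑I) ⊆ convexHull ℝ (z '' ↑I') :=
    convexHull_mono (Set.image_mono (Finset.coe_subset.mpr hII'))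
  have hA : BddBelow {s : ℝ | ∃ u xs,
      Feasible A B X U (convexHull ℝ (z '' ↑I')) N x u xs ∧
      s = (∑ k ∈ Finset.range N, h (xs k) (u k)) + barycentricOn I' z c (xs N)} := by
    refine ⟨0, ?_⟩
    rintro s ⟨u', xs', -, rfl⟩
    exact add_nonneg (Finset.sum_nonneg fun k _ => hpos _ _)
      (barycentricOn_nonneg I' z c hcpos _)
  refine le_csInf ⟨_, u, xs, hfeas, rfl⟩ ?_
  rintro s ⟨u', xs', hf', rfl⟩
  have hf'' : Feasible A B X U (convexHull ℝ (z '' ↑I')) N x u' xs' :=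
    ⟨hf'.1, hf'.2.1, hf'.2.2.1, hf'.2.2.2.1, hmono hf'.2.2.2.2⟩
  calc lmpcValue A B X U (convexHull ℝ (z '' ↑I')) N h (barycentricOn I' z c) x
      ≤ (∑ k ∈ Finset.range N, h (xs' k) (u' k)) + barycentricOn I' z c (xs' N) :=
        csInf_le hA ⟨u', xs', hf'', rfl⟩
    _ ≤ (∑ k ∈ Finset.range N, h (xs' k) (u' k)) + barycentricOn I z c (xs' N) :=
        add_le_add_right (part1 _ hf'.2.2.2.2) _
end
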